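/- For all nonnegative integers z₂ and z₃: M(2z₂, z₂, z₃) = 1 if z₃ ≤ z₂, and M(2z₂, z₂, z₃) = 0 if z₃ > z₂. -/
import Mathlib


/-- The partition function `℘(a₁,a₂)`: the number of triples `(m₁,m₂,m₃) ∈ ℕ₀³` with
`a₁ = 3(m₁+m₂)` and `a₂ = m₃ − m₁ − 2m₂`. -/
noncomputable def wp (a₁ a₂ : ℤ) : ℕ :=
  Set.ncard {m : ℕ × ℕ × ℕ |
    a₁ = 3 * ((m.1 : ℤ) + (m.2.1 : ℤ)) ∧ a₂ = (m.2.2 : ℤ) - (m.1 : ℤ) - 2 * (m.2.1 : ℤ)}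

/-- The branching multiplicity `m(z₁,z₂,z₃)` of the trivial `U•(2)`-representation in the
irreducible `SU(3)×SO(3)`-representation of highest weight `z₁λ₁+z₂λ₂+z₃μ₁`, expressed
as a seven-term alternating sum of partition function values. -/
noncomputable def branchM (z₁ z₂ z₃ : ℕ) : ℤ :=
  (wp ((z₁ : ℤ) + z₂) (-(z₃ : ℤ) - z₁ - 2) : ℤ)
  + (wp ((z₁ : ℤ) + z₂) ((z₃ : ℤ) - z₂) : ℤ)
  - (wp ((z₁ : ℤ) + z₂) (-(z₃ : ℤ) - z₂ - 1) : ℤ)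
  - (wp ((z₁ : ℤ) + z₂) ((z₃ : ℤ) - z₁ - 1) : ℤ)
  + (wp ((z₁ : ℤ) - 2 * z₂ - 3) ((z₂ : ℤ) + 1 - z₃) : ℤ)
  + (wp ((z₁ : ℤ) - 2 * z₂ - 3) ((z₂ : ℤ) - z₁ + z₃) : ℤ)
  - (wp ((z₁ : ℤ) - 2 * z₂ - 3) ((z₂ : ℤ) + 2 + z₃) : ℤ)

lemma wp_empty {a₁ a₂ : ℤ}
    (h : ∀ m₁ m₂ m₃ : ℕ, ¬(a₁ = 3*((m₁:ℤ)+m₂) ∧ a₂ = (m₃:ℤ)-m₁-2*m₂)) :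
    wp a₁ a₂ = 0 := by
  unfold wp
  convert Set.ncard_empty (ℕ × ℕ × ℕ)
  ext ⟨m₁, m₂, m₃⟩
  simpa using h m₁ m₂ m₃

lemma wp_zero (s : ℕ) (a₂ : ℤ) (h : a₂ + 2*s < 0) : wp (3*s) a₂ = 0 := by
  apply wp_empty
  intro m₁ m₂ m₃ ⟨h1, h2⟩
  omega

lemma wp_neg : ∀ a₂, wp (-3) a₂ = 0 := by
  intro a₂
  apply wp_empty
  intro m₁ m₂ m₃ ⟨h1, h2⟩
  omega

lemma wp_eq (s : ℕ) (a₂ : ℤ) (h : 0 ≤ a₂ + 2*s) :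
    wp (3*s) a₂ = min s (a₂ + 2*s).toNat + 1 := by
  unfold wp
  have hset : {m : ℕ × ℕ × ℕ |
      (3*s : ℤ) = 3 * ((m.1 : ℤ) + (m.2.1 : ℤ)) ∧ a₂ = (m.2.2 : ℤ) - (m.1 : ℤ) - 2 * (m.2.1 : ℤ)}
      = ↑((Finset.range (min s (a₂ + 2*s).toNat + 1)).image
          (fun m₁ => (m₁, s - m₁, (a₂ + 2*s - m₁).toNat))) := by
    ext ⟨m₁, m₂, m₃⟩
    simp only [Set.mem_setOf_eq, Finset.coe_image, Set.mem_image, Finset.mem_coe,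
      Finset.mem_range, Prod.mk.injEq]
    constructor
    · rintro ⟨h1, h2⟩
      exact ⟨m₁, by omega, rfl, by omega, by omega⟩
    · rintro ⟨a, ha, rfl, rfl, rfl⟩
      constructor <;> omega
  rw [hset, Set.ncard_coe_finset, Finset.card_image_of_injective, Finset.card_range]
  intro a b hab
  simpa using congrArg Prod.fst hab

lemma wp_eq' (s : ℕ) (a₂ : ℤ) :
    (wp (3*s) a₂ : ℤ) = max 0 (min ((s:ℤ)+1) (a₂ + 2*s + 1)) := by
  rcases le_or_gt 0 (a₂ + 2*s) with h | h
  · rw [wp_eq s a₂ h]; push_cast; omega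
  · rw [wp_zero s a₂ h]; omega

/-- **Multiplicity of the representations `ϱ(2z₂, z₂, z₃)`.**
For all nonnegative integers `z₂` and `z₃`: `m(2z₂, z₂, z₃) = 1` if `z₃ ≤ z₂`,
and `m(2z₂, z₂, z₃) = 0` if `z₃ > z₂`. -/
theorem branchM_two_z₂ (z₂ z₃ : ℕ) :
    (z₃ ≤ z₂ → branchM (2 * z₂) z₂ z₃ = 1) ∧ (z₂ < z₃ → branchM (2 * z₂) z₂ z₃ = 0) := by
  have e1 : ((2*z₂ : ℕ) : ℤ) + (z₂ : ℤ) = 3*(z₂:ℕ) := by push_cast; ring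
  have e2 : ((2*z₂ : ℕ) : ℤ) - 2*(z₂ : ℤ) - 3 = -3 := by push_cast; ring
  unfold branchM
  rw [e1, e2, wp_neg, wp_neg, wp_neg, wp_eq' z₂, wp_eq' z₂, wp_eq' z₂, wp_eq' z₂]
  push_cast
  constructor <;> intro h <;> omega
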